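/- Let k_x, k_y ∈ ℝ with 0 < k_x² + k_y² < 4. Then the system τ₂ − τ₁ = k_x + i k_y, 1/τ₂ − 1/τ₁ = k_x − i k_y (τ₁, τ₂ ∈ ℂ \ {0}) has exactly the two solutions τ₁ = ((k_x + ik_y)/2)(−1 ± i√((4 − k_x² − k_y²)/(k_x² + k_y²))), τ₂ = ((k_x + ik_y)/2)(1 ± i√((4 − k_x² − k_y²)/(k_x² + k_y²))), and in both cases |τ₁| = |τ₂| = 1. -/

import Mathlib

open Complex

/-- Resonant pairs for unstable modes: for `0 < kₓ² + k_y² < 4`, the system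
`τ₂ − τ₁ = kₓ + ik_y`, `1/τ₂ − 1/τ₁ = kₓ − ik_y` has exactly the two solutions
`τ₁ = ((kₓ+ik_y)/2)(−1 ± i√((4−kₓ²−k_y²)/(kₓ²+k_y²)))`,
`τ₂ = ((kₓ+ik_y)/2)(1 ± i√((4−kₓ²−k_y²)/(kₓ²+k_y²)))`, and in both cases
`|τ₁| = |τ₂| = 1`. -/
theorem resonant_pairs_unstable_modes
    (kx ky : ℝ) (h0 : 0 < kx ^ 2 + ky ^ 2) (h4 : kx ^ 2 + ky ^ 2 < 4) :
    ∀ τ₁ τ₂ : ℂ, τ₁ ≠ 0 → τ₂ ≠ 0 →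
      ((τ₂ - τ₁ = (kx : ℂ) + Complex.I * (ky : ℂ) ∧
        τ₂⁻¹ - τ₁⁻¹ = (kx : ℂ) - Complex.I * (ky : ℂ))
      ↔ (∃ s : ℝ, (s = 1 ∨ s = -1) ∧
          τ₁ = (((kx : ℂ) + Complex.I * (ky : ℂ)) / 2) *
            (-1 + (s : ℂ) * Complex.I *
              (Real.sqrt ((4 - (kx ^ 2 + ky ^ 2)) / (kx ^ 2 + ky ^ 2)) : ℂ)) ∧
          τ₂ = (((kx : ℂ) + Complex.I * (ky : ℂ)) / 2) *
            (1 + (s : ℂ) * Complex.I *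
              (Real.sqrt ((4 - (kx ^ 2 + ky ^ 2)) / (kx ^ 2 + ky ^ 2)) : ℂ)))) ∧
      ((τ₂ - τ₁ = (kx : ℂ) + Complex.I * (ky : ℂ) ∧
        τ₂⁻¹ - τ₁⁻¹ = (kx : ℂ) - Complex.I * (ky : ℂ)) →
        ‖τ₁‖ = 1 ∧ ‖τ₂‖ = 1) := by
  intro τ₁ τ₂ hτ₁ hτ₂
  have hKc : ((kx:ℂ)^2 + (ky:ℂ)^2) ≠ 0 := by
    intro h
    apply ne_of_gt h0
    have : ((kx^2 + ky^2 : ℝ) : ℂ) = 0 := by push_cast; linear_combination h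
    exact_mod_cast this
  set r : ℝ := Real.sqrt ((4 - (kx ^ 2 + ky ^ 2)) / (kx ^ 2 + ky ^ 2)) with hrdef
  have hr2 : r ^ 2 * (kx ^ 2 + ky ^ 2) = 4 - (kx ^ 2 + ky ^ 2) := by
    rw [hrdef, Real.sq_sqrt (div_nonneg (by linarith) h0.le)]
    field_simp
  have hrc : (r : ℂ) ^ 2 * ((kx:ℂ)^2 + (ky:ℂ)^2) = 4 - ((kx:ℂ)^2 + (ky:ℂ)^2) := by
    exact_mod_cast congrArg (Complex.ofReal) hr2
  have hkk : ((kx:ℂ) + Complex.I*ky) * ((kx:ℂ) - Complex.I*ky)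
      = ((kx:ℂ)^2 + (ky:ℂ)^2) := by
    linear_combination (-(ky:ℂ)^2) * Complex.I_sq
  -- Forward direction
  have hfwd : (τ₂ - τ₁ = (kx : ℂ) + Complex.I * (ky : ℂ) ∧
        τ₂⁻¹ - τ₁⁻¹ = (kx : ℂ) - Complex.I * (ky : ℂ)) →
      (∃ s : ℝ, (s = 1 ∨ s = -1) ∧
          τ₁ = (((kx : ℂ) + Complex.I * (ky : ℂ)) / 2) *
            (-1 + (s : ℂ) * Complex.I * (r : ℂ)) ∧
          τ₂ = (((kx : ℂ) + Complex.I * (ky : ℂ)) / 2) *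
            (1 + (s : ℂ) * Complex.I * (r : ℂ))) := by
    rintro ⟨hA, hB⟩
    set k : ℂ := (kx:ℂ) + Complex.I * ky with hk
    field_simp at hB
    have hτ2eq : τ₂ = τ₁ + k := by linear_combination hA
    rw [hτ2eq] at hB
    have hquad : ((kx:ℂ)^2+(ky:ℂ)^2) * τ₁^2 + ((kx:ℂ)^2+(ky:ℂ)^2) * k * τ₁ + k^2 = 0 := by
      linear_combination (-k)*hB + (ky:ℂ)^2*(τ₁^2+k*τ₁)*Complex.I_sq
    have hfac : ((kx:ℂ)^2+(ky:ℂ)^2) *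
        ((τ₁ - (k/2)*(-1 + Complex.I*r)) * (τ₁ - (k/2)*(-1 - Complex.I*r))) = 0 := by
      linear_combination hquad + (k^2/4)*hrc - ((k^2/4)*(r:ℂ)^2*((kx:ℂ)^2+(ky:ℂ)^2))*Complex.I_sq
    rcases mul_eq_zero.mp hfac with h | h
    · exact absurd h hKc
    rcases mul_eq_zero.mp h with h | h
    · refine ⟨1, Or.inl rfl, ?_, ?_⟩
      · push_cast
        linear_combination h
      · push_cast
        rw [hτ2eq]
        linear_combination h
    · refine ⟨-1, Or.inr rfl, ?_, ?_⟩
      · push_cast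
        linear_combination h
      · push_cast
        rw [hτ2eq]
        linear_combination h
  constructor
  · constructor
    · exact hfwd
    · rintro ⟨s, hs, ht1, ht2⟩
      have hs2 : (s : ℂ)^2 = 1 := by rcases hs with h | h <;> subst h <;> norm_num
      have hprod : τ₁ * τ₂ * ((kx:ℂ)^2+(ky:ℂ)^2) = -((kx:ℂ) + Complex.I*ky)^2 := by
        rw [ht1, ht2]
        linear_combination ((((kx:ℂ) + Complex.I*ky)^2*((kx:ℂ)^2+(ky:ℂ)^2)/4)*Complex.I^2*(r:ℂ)^2)*hs2
          + ((((kx:ℂ) + Complex.I*ky)^2*((kx:ℂ)^2+(ky:ℂ)^2)/4)*(r:ℂ)^2)*Complex.I_sq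
          + (-(((kx:ℂ) + Complex.I*ky)^2)/4)*hrc
      constructor
      · rw [ht1, ht2]; ring
      · rw [inv_sub_inv hτ₂ hτ₁, div_eq_iff (mul_ne_zero hτ₂ hτ₁)]
        apply mul_right_cancel₀ hKc
        linear_combination ((kx:ℂ)^2+(ky:ℂ)^2)*(ht1 - ht2)
          + (-((kx:ℂ) - Complex.I*ky))*hprod
          + (((kx:ℂ) + Complex.I*ky))*hkk
  · intro h
    obtain ⟨s, hs, ht1, ht2⟩ := hfwd h
    have hs2 : (s : ℂ)^2 = 1 := by rcases hs with h' | h' <;> subst h' <;> norm_num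
    have hc1 : (starRingEnd ℂ) τ₁ = (((kx:ℂ) - Complex.I*ky)/2) * (-1 - (s:ℂ)*Complex.I*(r:ℂ)) := by
      rw [ht1]
      simp only [map_mul, map_div₀, map_add, map_sub, map_neg, map_one, map_ofNat,
        Complex.conj_I, Complex.conj_ofReal]
      ring
    have hc2 : (starRingEnd ℂ) τ₂ = (((kx:ℂ) - Complex.I*ky)/2) * (1 - (s:ℂ)*Complex.I*(r:ℂ)) := by
      rw [ht2]
      simp only [map_mul, map_div₀, map_add, map_sub, map_neg, map_one, map_ofNat,
        Complex.conj_I, Complex.conj_ofReal]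
      ring
    have key1 : τ₁ * (starRingEnd ℂ) τ₁ = 1 := by
      rw [hc1, ht1]
      linear_combination (-(((kx:ℂ) + Complex.I*ky)*((kx:ℂ) - Complex.I*ky)/4)*Complex.I^2*(r:ℂ)^2)*hs2
        + (-(((kx:ℂ) + Complex.I*ky)*((kx:ℂ) - Complex.I*ky)/4)*(r:ℂ)^2)*Complex.I_sq
        + ((1+(r:ℂ)^2)/4)*hkk + (1/4 : ℂ)*hrc
    have key2 : τ₂ * (starRingEnd ℂ) τ₂ = 1 := by
      rw [hc2, ht2]
      linear_combination (-(((kx:ℂ) + Complex.I*ky)*((kx:ℂ) - Complex.I*ky)/4)*Complex.I^2*(r:ℂ)^2)*hs2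
        + (-(((kx:ℂ) + Complex.I*ky)*((kx:ℂ) - Complex.I*ky)/4)*(r:ℂ)^2)*Complex.I_sq
        + ((1+(r:ℂ)^2)/4)*hkk + (1/4 : ℂ)*hrc
    have hn1 : Complex.normSq τ₁ = 1 := by
      have : ((Complex.normSq τ₁ : ℝ) : ℂ) = 1 := by rw [← Complex.mul_conj]; exact key1
      exact_mod_cast this
    have hn2 : Complex.normSq τ₂ = 1 := by
      have : ((Complex.normSq τ₂ : ℝ) : ℂ) = 1 := by rw [← Complex.mul_conj]; exact key2
      exact_mod_cast this
    constructor
    · rw [Complex.norm_def, hn1, Real.sqrt_one]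
    · rw [Complex.norm_def, hn2, Real.sqrt_one]
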